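/- For any α, β ∈ k, set s = α·(x_1 + … + x_a) + β·(y_1 + … + y_b), and define the twisted operators E' = E, H' = H − (a·α + b·β)·id, F' = F + (multiplication by s). Then E', H', F' satisfy the sl₂ commutation relations: H'∘E' − E'∘H' = 2·E', H'∘F' − F'∘H' = −2·F', and E'∘F' − F'∘E' = H'. (This is the paper's classification result that a hollow green dot of multiplicity α and a solid green dot of multiplicity β define a twisted sl₂-module structure on a facet of thickness a, with b = N − a.) -/

import Mathlib

open MvPolynomial

/-- `E = -(∑ᵢ ∂_{xᵢ} + ∑ⱼ ∂_{yⱼ})` on `k[x₁, …, x_a, y₁, …, y_b]`. -/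
noncomputable def opE (k : Type*) [CommRing k] (a b : ℕ) :
    Module.End k (MvPolynomial (Fin a ⊕ Fin b) k) :=
  - ∑ i : Fin a ⊕ Fin b, (pderiv i).toLinearMap

/-- `H = -2·(∑ᵢ xᵢ·∂_{xᵢ} + ∑ⱼ yⱼ·∂_{yⱼ})` on `k[x₁, …, x_a, y₁, …, y_b]`. -/
noncomputable def opH (k : Type*) [CommRing k] (a b : ℕ) :
    Module.End k (MvPolynomial (Fin a ⊕ Fin b) k) :=
  - (2 • ∑ i : Fin a ⊕ Fin b, (LinearMap.mulLeft k (X i)) ∘ₗ (pderiv i).toLinearMap)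

/-- `F = ∑ᵢ xᵢ²·∂_{xᵢ} + ∑ⱼ yⱼ²·∂_{yⱼ}` on `k[x₁, …, x_a, y₁, …, y_b]`. -/
noncomputable def opF (k : Type*) [CommRing k] (a b : ℕ) :
    Module.End k (MvPolynomial (Fin a ⊕ Fin b) k) :=
  ∑ i : Fin a ⊕ Fin b, (LinearMap.mulLeft k (X i ^ 2)) ∘ₗ (pderiv i).toLinearMap

/-- The degree-one twisting polynomial `s = α·(x₁+…+x_a) + β·(y₁+…+y_b)`. -/
noncomputable def twistPoly (k : Type*) [CommRing k] (a b : ℕ) (α β : k) :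
    MvPolynomial (Fin a ⊕ Fin b) k :=
  α • (∑ i : Fin a, X (Sum.inl i)) + β • (∑ j : Fin b, X (Sum.inr j))


section helpers

variable {k : Type*} [CommRing k] {σ : Type*} [DecidableEq σ]

theorem pderiv_comm' (i j : σ) (f : MvPolynomial σ k) :
    pderiv i (pderiv j f) = pderiv j (pderiv i f) := by
  induction f using MvPolynomial.induction_on' with
  | monomial s c =>
    rcases eq_or_ne i j with rfl | h
    · rfl
    · simp only [pderiv_monomial, Finsupp.tsub_apply,
        Finsupp.single_eq_of_ne' h, Finsupp.single_eq_of_ne' (Ne.symm h), tsub_zero]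
      rw [tsub_tsub, tsub_tsub, add_comm, mul_right_comm]
  | add p q hp hq => simp [hp, hq]

theorem termDA (i j : σ) (q : MvPolynomial σ k) :
    (pderiv i).toLinearMap * (LinearMap.mulLeft k q * (pderiv j).toLinearMap)
      - (LinearMap.mulLeft k q * (pderiv j).toLinearMap) * (pderiv i).toLinearMap
      = LinearMap.mulLeft k (pderiv i q) * (pderiv j).toLinearMap := by
  refine LinearMap.ext fun r => ?_
  simp only [LinearMap.sub_apply, Module.End.mul_apply, LinearMap.mulLeft_apply,
    Derivation.coeFn_coe, pderiv_mul]
  rw [pderiv_comm' i j r]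
  ring

theorem termDS (i : σ) (s : MvPolynomial σ k) :
    (pderiv i).toLinearMap * LinearMap.mulLeft k s
      - LinearMap.mulLeft k s * (pderiv i).toLinearMap
      = LinearMap.mulLeft k (pderiv i s) := by
  refine LinearMap.ext fun r => ?_
  simp only [LinearMap.sub_apply, Module.End.mul_apply, LinearMap.mulLeft_apply,
    Derivation.coeFn_coe, pderiv_mul]
  ring

theorem termBC (i j : σ) (p q : MvPolynomial σ k) :
    (LinearMap.mulLeft k p * (pderiv i).toLinearMap)
        * (LinearMap.mulLeft k q * (pderiv j).toLinearMap)
      - (LinearMap.mulLeft k q * (pderiv j).toLinearMap)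
        * (LinearMap.mulLeft k p * (pderiv i).toLinearMap)
      = LinearMap.mulLeft k (p * pderiv i q) * (pderiv j).toLinearMap
        - LinearMap.mulLeft k (q * pderiv j p) * (pderiv i).toLinearMap := by
  refine LinearMap.ext fun r => ?_
  simp only [LinearMap.sub_apply, Module.End.mul_apply, LinearMap.mulLeft_apply,
    Derivation.coeFn_coe, pderiv_mul]
  rw [pderiv_comm' i j r]
  ring

theorem termBS (i : σ) (p s : MvPolynomial σ k) :
    (LinearMap.mulLeft k p * (pderiv i).toLinearMap) * LinearMap.mulLeft k s
      - LinearMap.mulLeft k s * (LinearMap.mulLeft k p * (pderiv i).toLinearMap)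
      = LinearMap.mulLeft k (p * pderiv i s) := by
  refine LinearMap.ext fun r => ?_
  simp only [LinearMap.sub_apply, Module.End.mul_apply, LinearMap.mulLeft_apply,
    Derivation.coeFn_coe, pderiv_mul]
  ring

theorem comm_sum_sum {R : Type*} [Ring R] {ι : Type*} [Fintype ι] (f g : ι → R) :
    (∑ i, f i) * (∑ j, g j) - (∑ i, g i) * (∑ j, f j)
      = ∑ i, ∑ j, (f i * g j - g j * f i) := by
  rw [Finset.sum_mul_sum, Finset.sum_mul_sum,
    Finset.sum_comm (f := fun i j => g i * f j), ← Finset.sum_sub_distrib]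
  exact Finset.sum_congr rfl fun i _ => (Finset.sum_sub_distrib _ _).symm

theorem comm_sum_single {R : Type*} [Ring R] {ι : Type*} [Fintype ι] (f : ι → R) (S : R) :
    (∑ i, f i) * S - S * ∑ i, f i = ∑ i, (f i * S - S * f i) := by
  rw [Finset.sum_mul, Finset.mul_sum, ← Finset.sum_sub_distrib]

end helpers

section main
variable {k : Type*} [CommRing k] {a b : ℕ}

local notation "ι" => (Fin a ⊕ Fin b)
local notation "P" => MvPolynomial (Fin a ⊕ Fin b) k

-- M of a constant multiple of 1
theorem mulLeft_smul_one (c : k) :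
    LinearMap.mulLeft k ((c • 1 : P)) = c • (1 : Module.End k P) := by
  refine LinearMap.ext fun r => ?_
  simp [smul_mul_assoc]

theorem sum_pderiv_twist (α β : k) :
    ∑ i : ι, pderiv i (twistPoly k a b α β) = ((a : k) * α + (b : k) * β) • (1 : P) := by
  classical
  simp only [twistPoly, map_add, map_smul, map_sum]
  rw [Fintype.sum_sum_type]
  simp [Finset.mul_sum, Finset.sum_comm, pderiv_X, Pi.single_apply, Finset.sum_ite_eq,
    add_smul, smul_smul, mul_comm]
  simp [mul_smul, Nat.cast_smul_eq_nsmul, nsmul_eq_mul]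


theorem sum_X_mul_pderiv_twist (α β : k) :
    ∑ i : ι, (X i : P) * pderiv i (twistPoly k a b α β) = twistPoly k a b α β := by
  classical
  simp only [twistPoly, map_add, map_smul, map_sum]
  rw [Fintype.sum_sum_type]
  simp [pderiv_X, Pi.single_apply, Finset.mul_sum, mul_ite, Finset.sum_ite_eq,
    Finset.smul_sum, mul_comm]

theorem mulLeft_sum {ιx : Type*} (s : Finset ιx) (f : ιx → P) :
    ∑ i ∈ s, LinearMap.mulLeft k (f i) = LinearMap.mulLeft k (∑ i ∈ s, f i) := by
  refine LinearMap.ext fun r => ?_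
  simp [Finset.sum_mul]

theorem sl2_assemble {R : Type*} (kk : Type*) [CommRing kk] [Ring R] [Algebra kk R]
    (A B C S : R) (c : kk)
    (hAB : A * B - B * A = A) (hAC : A * C - C * A = 2 • B)
    (hAS : A * S - S * A = c • 1)
    (hBC : B * C - C * B = C) (hBS : B * S - S * B = S) :
    ((-(2 • B) - c • 1) * (-A) - (-A) * (-(2 • B) - c • 1) = 2 • (-A)) ∧
    ((-(2 • B) - c • 1) * (C + S) - (C + S) * (-(2 • B) - c • 1) = -(2 • (C + S))) ∧
    ((-A) * (C + S) - (C + S) * (-A) = -(2 • B) - c • 1) := by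
  have h1 : A * B = A + B * A := eq_add_of_sub_eq hAB
  have h2 : A * C = 2 • B + C * A := eq_add_of_sub_eq hAC
  have h3 : A * S = c • 1 + S * A := eq_add_of_sub_eq hAS
  have h4 : B * C = C + C * B := eq_add_of_sub_eq hBC
  have h5 : B * S = S + S * B := eq_add_of_sub_eq hBS
  refine ⟨?_, ?_, ?_⟩ <;>
  · simp only [mul_sub, sub_mul, mul_add, add_mul, neg_mul, mul_neg, neg_neg,
      smul_mul_assoc, mul_smul_comm, one_mul, mul_one, h1, h2, h3, h4, h5, smul_add, smul_neg]
    abel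

end main

/-- The green-dot twisted operators `E' = E`, `H' = H - (aα + bβ)·id`,
`F' = F + (multiplication by s)` satisfy the sl₂ commutation relations. -/
theorem twisted_sl2_relations (k : Type*) [CommRing k] (a b : ℕ) (α β : k) :
    let E' : Module.End k (MvPolynomial (Fin a ⊕ Fin b) k) := opE k a b
    let H' : Module.End k (MvPolynomial (Fin a ⊕ Fin b) k) :=
      opH k a b - ((a : k) * α + (b : k) * β) • 1
    let F' : Module.End k (MvPolynomial (Fin a ⊕ Fin b) k) :=
      opF k a b + LinearMap.mulLeft k (twistPoly k a b α β)
    H' ∘ₗ E' - E' ∘ₗ H' = 2 • E' ∧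
    H' ∘ₗ F' - F' ∘ₗ H' = -(2 • F') ∧
    E' ∘ₗ F' - F' ∘ₗ E' = H' := by
  classical
  intro E' H' F'
  set A : Module.End k (MvPolynomial (Fin a ⊕ Fin b) k) :=
    ∑ i : Fin a ⊕ Fin b, (pderiv i).toLinearMap with hA
  set B : Module.End k (MvPolynomial (Fin a ⊕ Fin b) k) :=
    ∑ i : Fin a ⊕ Fin b, LinearMap.mulLeft k (X i) * (pderiv i).toLinearMap with hB
  set Cc : Module.End k (MvPolynomial (Fin a ⊕ Fin b) k) :=
    ∑ i : Fin a ⊕ Fin b, LinearMap.mulLeft k (X i ^ 2) * (pderiv i).toLinearMap with hC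
  set S : Module.End k (MvPolynomial (Fin a ⊕ Fin b) k) :=
    LinearMap.mulLeft k (twistPoly k a b α β) with hS
  have hAB : A * B - B * A = A := by
    rw [hA, hB, comm_sum_sum]
    refine Finset.sum_congr rfl fun i _ => ?_
    rw [Finset.sum_congr rfl fun j _ => termDA i j (X j)]
    rw [Fintype.sum_eq_single i fun j hj => by
      simp [pderiv_X_of_ne hj, LinearMap.mulLeft_zero_eq_zero]]
    simp [LinearMap.mulLeft_one, Module.End.mul_eq_comp]
  have hAC : A * Cc - Cc * A = 2 • B := by
    rw [hA, hC, hB, comm_sum_sum, Finset.smul_sum]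
    refine Finset.sum_congr rfl fun i _ => ?_
    rw [Finset.sum_congr rfl fun j _ => termDA i j (X j ^ 2)]
    rw [Fintype.sum_eq_single i fun j hj => by
      simp [pderiv_pow, pderiv_X_of_ne hj, LinearMap.mulLeft_zero_eq_zero]]
    refine LinearMap.ext fun r => ?_
    simp [pderiv_pow, smul_mul_assoc]
  have hAS : A * S - S * A = ((a : k) * α + (b : k) * β) • 1 := by
    rw [hA, hS, comm_sum_single]
    rw [Finset.sum_congr rfl fun i _ => termDS i (twistPoly k a b α β)]
    rw [mulLeft_sum, sum_pderiv_twist, mulLeft_smul_one]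
  have hBC : B * Cc - Cc * B = Cc := by
    rw [hB, hC, comm_sum_sum]
    refine Finset.sum_congr rfl fun i _ => ?_
    rw [Finset.sum_congr rfl fun j _ => termBC i j (X i) (X j ^ 2)]
    rw [Finset.sum_sub_distrib]
    rw [Fintype.sum_eq_single i fun j hj => by
      simp [pderiv_pow, pderiv_X_of_ne hj, LinearMap.mulLeft_zero_eq_zero]]
    rw [Fintype.sum_eq_single i fun j hj => by
      simp [pderiv_X_of_ne (Ne.symm hj), LinearMap.mulLeft_zero_eq_zero]]
    refine LinearMap.ext fun r => ?_
    simp [pderiv_pow]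
    ring
  have hBS : B * S - S * B = S := by
    rw [hB, hS, comm_sum_single]
    rw [Finset.sum_congr rfl fun i _ => termBS i (X i) (twistPoly k a b α β)]
    rw [mulLeft_sum, sum_X_mul_pderiv_twist]
  have key := sl2_assemble k A B Cc S ((a : k) * α + (b : k) * β) hAB hAC hAS hBC hBS
  have hE' : E' = -A := rfl
  have hH' : H' = -(2 • B) - ((a : k) * α + (b : k) * β) • 1 := rfl
  have hF' : F' = Cc + S := rfl
  rw [hE', hH', hF']
  simp only [← Module.End.mul_eq_comp]
  exact key
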